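/- arXiv:1911.07579 — 3 statements merged into one kernel-verified Lean document; each statement's English description precedes it below -/
import Mathlib

section
/- For every real q ≥ 2, every t > 0 and every x ∈ ℝ^d, writing a = e^{−t} ∈ (0,1), one has ∫_{ℝ^d} p_t(x,y)^q dμ(y) ≤ (1 − a²)^{−(q−1)d/2} · e^{(q−1)|x|²/2}. -/
open MeasureTheory ProbabilityTheory Filter Set

noncomputable def stdGaussian (d : ℕ) : Measure (EuclideanSpace ℝ (Fin d)) :=
  (volume : Measure (EuclideanSpace ℝ (Fin d))).withDensity
    (fun x => ENNReal.ofReal ((2 * Real.pi) ^ (-(d : ℝ) / 2) * Real.exp (-‖x‖ ^ 2 / 2)))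

/-- `p`-th power of the Kantorovich distance, as an extended real. -/
noncomputable def wassersteinPow (d : ℕ) (p : ℝ)
    (ν μ : Measure (EuclideanSpace ℝ (Fin d))) : ENNReal :=
  ⨅ (π : Measure (EuclideanSpace ℝ (Fin d) × EuclideanSpace ℝ (Fin d)))
    (_ : π.map Prod.fst = ν) (_ : π.map Prod.snd = μ),
      ∫⁻ z, ENNReal.ofReal (‖z.1 - z.2‖ ^ p) ∂π

noncomputable def wasserstein (d : ℕ) (p : ℝ)
    (ν μ : Measure (EuclideanSpace ℝ (Fin d))) : ENNReal :=
  (wassersteinPow d p ν μ) ^ (1 / p)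

noncomputable def empMeasure {Ω : Type*} {d n : ℕ}
    (X : Fin n → Ω → EuclideanSpace ℝ (Fin d)) (ω : Ω) :
    Measure (EuclideanSpace ℝ (Fin d)) :=
  (n : ENNReal)⁻¹ • ∑ i, Measure.dirac (X i ω)

noncomputable def mehler (d : ℕ) (t : ℝ) (x y : EuclideanSpace ℝ (Fin d)) : ℝ :=
  (1 - Real.exp (-2 * t)) ^ (-(d : ℝ) / 2) *
    Real.exp (-(Real.exp (-2 * t) / (2 * (1 - Real.exp (-2 * t)))) *
      (‖x‖ ^ 2 + ‖y‖ ^ 2 - 2 * Real.exp t * inner ℝ x y))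

noncomputable def ouSemigroup (d : ℕ) (t : ℝ) (f : EuclideanSpace ℝ (Fin d) → ℝ)
    (x : EuclideanSpace ℝ (Fin d)) : ℝ :=
  ∫ y, f (Real.exp (-t) • x + Real.sqrt (1 - Real.exp (-2 * t)) • y) ∂(stdGaussian d)

/-- `(-L)⁻¹ g = ∫_0^∞ P_s g ds` for mean-zero `g`. -/
noncomputable def invL (d : ℕ) (g : EuclideanSpace ℝ (Fin d) → ℝ)
    (x : EuclideanSpace ℝ (Fin d)) : ℝ :=
  ∫ s in Set.Ioi (0 : ℝ), ouSemigroup d s g x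

noncomputable def negSobolevNorm (d : ℕ) (p : ℝ)
    (g : EuclideanSpace ℝ (Fin d) → ℝ) : ℝ :=
  (∫ x, ‖fderiv ℝ (invL d g) x‖ ^ p ∂(stdGaussian d)) ^ (1 / p)

noncomputable def gaussianPerimeter (d : ℕ) (A : Set (EuclideanSpace ℝ (Fin d))) : ENNReal :=
  Filter.limsup
    (fun ε => ∫⁻ x, ‖fderiv ℝ (ouSemigroup d ε (A.indicator fun _ => (1 : ℝ))) x‖₊ ∂(stdGaussian d))
    (nhdsWithin 0 (Set.Ioi (0 : ℝ)))

section helpers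

open Real Complex
open scoped RealInnerProductSpace

variable {V : Type*} [NormedAddCommGroup V] [InnerProductSpace ℝ V] [FiniteDimensional ℝ V]
  [MeasurableSpace V] [BorelSpace V]

omit [FiniteDimensional ℝ V] [MeasurableSpace V] [BorelSpace V] in
lemma heq_aux (b c : ℝ) (w v : V) : ((rexp (-b * ‖v‖ ^ 2 + c * ⟪w, v⟫) : ℝ) : ℂ)
    = cexp (-(b : ℂ) * ‖v‖ ^ 2 + (c : ℂ) * (⟪w, v⟫ : ℝ)) := by
  rw [Complex.ofReal_exp]; congr 1; push_cast; ring

lemma integrable_rexp_neg_mul_sq_norm_add {b : ℝ} (hb : 0 < b) (c : ℝ) (w : V) :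
    Integrable (fun v : V => rexp (-b * ‖v‖ ^ 2 + c * ⟪w, v⟫)) := by
  have h := (GaussianFourier.integrable_cexp_neg_mul_sq_norm_add
    (V := V) (b := (b : ℂ)) (by simpa using hb) (c : ℂ) w).re
  refine h.congr (Filter.Eventually.of_forall fun v => ?_)
  show (cexp (-(b:ℂ) * ‖v‖ ^ 2 + (c:ℂ) * (⟪w, v⟫:ℝ))).re = _
  rw [show (-(b:ℂ) * ‖v‖^2 + (c:ℂ)*(⟪w,v⟫:ℝ)) = ((-b*‖v‖^2 + c*⟪w,v⟫ : ℝ) : ℂ) by push_cast; ring,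
    ← Complex.ofReal_exp, Complex.ofReal_re]

lemma integral_rexp_neg_mul_sq_norm_add' {b : ℝ} (hb : 0 < b) (c : ℝ) (w : V) :
    ∫ v : V, rexp (-b * ‖v‖ ^ 2 + c * ⟪w, v⟫) =
      (π / b) ^ ((Module.finrank ℝ V : ℝ) / 2) * rexp (c ^ 2 * ‖w‖ ^ 2 / (4 * b)) := by
  rw [← Complex.ofReal_inj]
  have h := GaussianFourier.integral_cexp_neg_mul_sq_norm_add
    (V := V) (b := (b : ℂ)) (by simpa using hb) (c : ℂ) w
  calc ((∫ v : V, rexp (-b * ‖v‖ ^ 2 + c * ⟪w, v⟫) : ℝ) : ℂ)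
      = ∫ v : V, cexp (-(b : ℂ) * ‖v‖ ^ 2 + (c : ℂ) * (⟪w, v⟫ : ℝ)) := by
        change ofRealLI (∫ v : V, rexp (-b * ‖v‖ ^ 2 + c * ⟪w, v⟫)) = _
        rw [← ofRealLI.integral_comp_comm]
        exact integral_congr_ae (Filter.Eventually.of_forall fun v => heq_aux b c w v)
    _ = ((π / b : ℝ) ^ ((Module.finrank ℝ V : ℝ) / 2) * rexp (c ^ 2 * ‖w‖ ^ 2 / (4 * b)) : ℝ) := by
        rw [h, Complex.ofReal_mul]
        congr 1
        · rw [← Complex.ofReal_div, Complex.ofReal_cpow (by positivity)]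
          norm_num
        · rw [Complex.ofReal_exp]
          congr 1
          push_cast; ring

end helpers

open Real
open scoped RealInnerProductSpace

lemma coef_aux {q a : ℝ} (hq : 2 ≤ q) (ha0 : 0 < a) (ha1 : a < 1) :
    q*(q-1)*a^2*2 ≤ (q-1)*(2*(1+(q-1)*a^2)) := by
  nlinarith [mul_nonneg (show (0:ℝ) ≤ q-1 by linarith) (show (0:ℝ) ≤ 1 - a^2 by nlinarith)]

theorem mehler_q_integral_bound (d : ℕ) (q : ℝ) (hq : 2 ≤ q) (t : ℝ) (ht : 0 < t)
    (x : EuclideanSpace ℝ (Fin d)) :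
    ∫⁻ y, ENNReal.ofReal (mehler d t x y ^ q) ∂(stdGaussian d) ≤
      ENNReal.ofReal
        ((1 - Real.exp (-t) ^ 2) ^ (-((q - 1) * d) / 2) * Real.exp ((q - 1) * ‖x‖ ^ 2 / 2)) := by
  have hπ : (0:ℝ) < π := Real.pi_pos
  set a : ℝ := rexp (-t) with ha_def
  have ha0 : 0 < a := Real.exp_pos _
  have ha1 : a < 1 := by
    rw [ha_def]
    exact Real.exp_lt_one_iff.mpr (by linarith)
  have ha2 : rexp (-2*t) = a^2 := by
    rw [ha_def, show (-2:ℝ)*t = (-t) + (-t) by ring, Real.exp_add, sq]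
  have hexp_t : rexp t = a⁻¹ := by
    rw [ha_def, Real.exp_neg, inv_inv]
  set b' : ℝ := 1 - a^2 with hb'_def
  have hb'0 : 0 < b' := by nlinarith
  have hq1 : (1:ℝ) ≤ q - 1 := by linarith
  set S : ℝ := 1 + (q-1)*a^2 with hS_def
  have hS1 : 1 ≤ S := by nlinarith
  have hS0 : 0 < S := by linarith
  set β : ℝ := S / (2*b') with hβ_def
  have hβ0 : 0 < β := by positivity
  set c : ℝ := q*a/b' with hc_def
  set K : ℝ := b'^(-(d:ℝ)/2*q) * (2*π)^(-(d:ℝ)/2) * rexp (-(q*a^2/(2*b'))*‖x‖^2) with hK_def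
  have hK0 : 0 ≤ K := by positivity
  -- pointwise identity
  have hpt : ∀ y : EuclideanSpace ℝ (Fin d),
      (2*π)^(-(d:ℝ)/2) * rexp (-‖y‖^2/2) * (mehler d t x y ^ q)
        = K * rexp (-β*‖y‖^2 + c*⟪x,y⟫) := by
    intro y
    have hexpeq : -‖y‖^2/2 + (-(a^2 / (2 * b')) * (‖x‖ ^ 2 + ‖y‖ ^ 2 - 2 * rexp t * ⟪x,y⟫)) * q
        = -(q*a^2/(2*b'))*‖x‖^2 + (-β*‖y‖^2 + c*⟪x,y⟫) := by
      rw [hexp_t, hβ_def, hc_def, hS_def, hb'_def]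
      have h1 : (1:ℝ) - a^2 ≠ 0 := by nlinarith
      field_simp
      ring
    rw [mehler, ha2]
    rw [Real.mul_rpow (Real.rpow_nonneg hb'0.le _) (Real.exp_nonneg _),
      ← Real.rpow_mul hb'0.le, ← Real.exp_mul]
    rw [show (2*π:ℝ)^(-(d:ℝ)/2) * rexp (-‖y‖^2/2) *
        (b'^(-(d:ℝ)/2*q) * rexp ((-(a^2 / (2 * b')) * (‖x‖ ^ 2 + ‖y‖ ^ 2 - 2 * rexp t * ⟪x,y⟫)) * q))
        = b'^(-(d:ℝ)/2*q) * (2*π)^(-(d:ℝ)/2) *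
          rexp (-‖y‖^2/2 + (-(a^2 / (2 * b')) * (‖x‖ ^ 2 + ‖y‖ ^ 2 - 2 * rexp t * ⟪x,y⟫)) * q) by
      rw [Real.exp_add]; ring]
    rw [hexpeq, hK_def, Real.exp_add]
    ring
  -- measurability
  have hinner : Continuous fun y : EuclideanSpace ℝ (Fin d) => (⟪x, y⟫ : ℝ) :=
    continuous_const.inner continuous_id
  have hcont : Continuous fun y : EuclideanSpace ℝ (Fin d) => mehler d t x y := by
    simp only [mehler]
    exact continuous_const.mul (Real.continuous_exp.comp (continuous_const.mul
      ((continuous_const.add ((continuous_norm.pow 2))).sub (continuous_const.mul hinner))))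
  have hf : Measurable fun y : EuclideanSpace ℝ (Fin d) =>
      ENNReal.ofReal (mehler d t x y ^ q) :=
    ((hcont.rpow_const fun y => Or.inr (by linarith)).measurable).ennreal_ofReal
  have hρ : Measurable fun y : EuclideanSpace ℝ (Fin d) =>
      ENNReal.ofReal ((2 * π) ^ (-(d : ℝ) / 2) * rexp (-‖y‖ ^ 2 / 2)) := by
    apply Measurable.ennreal_ofReal
    fun_prop
  rw [_root_.stdGaussian, lintegral_withDensity_eq_lintegral_mul _ hρ hf]
  have hcongr : ∀ y : EuclideanSpace ℝ (Fin d),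
      ENNReal.ofReal ((2 * π) ^ (-(d : ℝ) / 2) * rexp (-‖y‖ ^ 2 / 2)) *
        ENNReal.ofReal (mehler d t x y ^ q)
      = ENNReal.ofReal (K * rexp (-β*‖y‖^2 + c*⟪x,y⟫)) := by
    intro y
    rw [← ENNReal.ofReal_mul (by positivity)]
    exact congrArg ENNReal.ofReal (hpt y)
  simp only [Pi.mul_apply]
  rw [lintegral_congr hcongr]
  have hint : Integrable (fun y : EuclideanSpace ℝ (Fin d) =>
      rexp (-β*‖y‖^2 + c*⟪x,y⟫)) := integrable_rexp_neg_mul_sq_norm_add hβ0 c x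
  rw [← ofReal_integral_eq_lintegral_ofReal (hint.const_mul K)
    (Filter.Eventually.of_forall fun y => by positivity)]
  rw [integral_const_mul, integral_rexp_neg_mul_sq_norm_add' hβ0 c x]
  apply ENNReal.ofReal_le_ofReal
  rw [finrank_euclideanSpace_fin]
  -- constant identity
  have hlogβ : Real.log β = Real.log S - (Real.log 2 + Real.log b') := by
    rw [hβ_def, Real.log_div hS0.ne' (by positivity), Real.log_mul two_ne_zero hb'0.ne']
  have hC : b'^(-(d:ℝ)/2*q) * (2*π)^(-(d:ℝ)/2) * (π/β)^((d:ℝ)/2)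
      = b'^(-((q-1)*(d:ℝ))/2) * S^(-((d:ℝ)/2)) := by
    rw [Real.rpow_def_of_pos hb'0, Real.rpow_def_of_pos (by positivity),
      Real.rpow_def_of_pos (by positivity), Real.rpow_def_of_pos hb'0,
      Real.rpow_def_of_pos hS0, ← Real.exp_add, ← Real.exp_add, ← Real.exp_add]
    congr 1
    rw [Real.log_div hπ.ne' hβ0.ne', hlogβ, Real.log_mul two_ne_zero hπ.ne']
    ring
  have hco : -(q*a^2/(2*b')) + c^2/(4*β) = q*(q-1)*a^2/(2*S) := by
    rw [hc_def, hβ_def, hS_def, hb'_def]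
    have h1 : (1:ℝ) - a^2 ≠ 0 := by nlinarith
    have h2 : (1:ℝ) + (q-1)*a^2 ≠ 0 := by nlinarith
    field_simp
    ring
  have hcoef : q*(q-1)*a^2/(2*S) ≤ (q-1)/2 := by
    rw [div_le_div_iff₀ (by positivity) two_pos, hS_def]
    exact coef_aux hq ha0 ha1
  have hexple : -(q*a^2/(2*b'))*‖x‖^2 + c^2*‖x‖^2/(4*β) ≤ (q-1)*‖x‖^2/2 := by
    have h3 : -(q*a^2/(2*b'))*‖x‖^2 + c^2*‖x‖^2/(4*β)
        = (-(q*a^2/(2*b')) + c^2/(4*β))*‖x‖^2 := by ring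
    rw [h3, hco]
    have := mul_le_mul_of_nonneg_right hcoef (by positivity : (0:ℝ) ≤ ‖x‖^2)
    linarith
  calc K * ((π/β)^((d:ℝ)/2) * rexp (c^2*‖x‖^2/(4*β)))
      = (b'^(-(d:ℝ)/2*q) * (2*π)^(-(d:ℝ)/2) * (π/β)^((d:ℝ)/2)) *
        rexp (-(q*a^2/(2*b'))*‖x‖^2 + c^2*‖x‖^2/(4*β)) := by
        rw [hK_def, Real.exp_add]; ring
    _ = b'^(-((q-1)*(d:ℝ))/2) * (S^(-((d:ℝ)/2)) *
        rexp (-(q*a^2/(2*b'))*‖x‖^2 + c^2*‖x‖^2/(4*β))) := by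
        rw [hC]; ring
    _ ≤ b'^(-((q-1)*(d:ℝ))/2) * (1 * rexp ((q-1)*‖x‖^2/2)) := by
        apply mul_le_mul_of_nonneg_left ?_ (Real.rpow_nonneg hb'0.le _)
        apply mul_le_mul
        · exact Real.rpow_le_one_of_one_le_of_nonpos hS1 (by
            rw [neg_nonpos]; positivity)
        · exact Real.exp_le_exp.mpr hexple
        · positivity
        · norm_num
    _ = b'^(-((q-1)*(d:ℝ))/2) * rexp ((q-1)*‖x‖^2/2) := by rw [one_mul]
end

section
/- Let μ be the standard Gaussian measure on ℝ^d, d ≥ 3, let p ∈ [1, d), and let c ∈ (p/d, 1). Let X_1, …, X_n be i.i.d. with law μ, let R = √(2c log n), let μ^R be μ conditioned on the closed Euclidean ball B_R of radius R centered at 0, and define X_i^R = X_i if X_i ∈ B_R and X_i^R = Z_i otherwise, where Z_1, …, Z_n are i.i.d. with law μ^R and independent of the X_i. Set μ_n = (1/n)∑ δ_{X_i} and μ_n^R = (1/n)∑ δ_{X_i^R}. Then there is a constant C > 0 depending only on p, d, c such that for all n large enough, E[ W_p^p(μ_n, μ_n^R) ] ≤ C n^{−p/d}. -/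
open MeasureTheory ProbabilityTheory Filter Set

lemma map_sum_dirac {α β : Type*} [MeasurableSpace α] [MeasurableSpace β] {f : α → β}
    (hf : Measurable f) {n : ℕ} (g : Fin n → α) :
    Measure.map f (∑ i, Measure.dirac (g i)) = ∑ i, Measure.dirac (f (g i)) := by
  ext s hs
  rw [Measure.map_apply hf hs, Measure.finset_sum_apply, Measure.finset_sum_apply]
  refine Finset.sum_congr rfl fun i _ => ?_
  rw [Measure.dirac_apply' _ (hf hs), Measure.dirac_apply' _ hs]
  rfl

lemma lintegral_exp_neg_mul_sq_norm_lt_top (d : ℕ) {a : ℝ} (ha : 0 < a) :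
    ∫⁻ x : EuclideanSpace ℝ (Fin d), ENNReal.ofReal (Real.exp (-a * ‖x‖ ^ 2)) < ⊤ := by
  have hi : Integrable (fun v : EuclideanSpace ℝ (Fin d) =>
      Complex.exp (((-a * ‖v‖ ^ 2 : ℝ) : ℂ))) := by
    have := GaussianFourier.integrable_cexp_neg_mul_sq_norm_add
      (V := EuclideanSpace ℝ (Fin d)) (b := (a : ℂ)) (by simpa using ha) 0
      (0 : EuclideanSpace ℝ (Fin d))
    simpa [Complex.ofReal_mul, Complex.ofReal_pow, neg_mul] using this
  refine lt_of_le_of_lt (lintegral_mono fun x => ?_) hi.hasFiniteIntegral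
  rw [← ofReal_norm_eq_enorm]
  simp only [Complex.norm_exp, Complex.ofReal_re, le_refl]

lemma cost_measurable (d : ℕ) {p : ℝ} (hp : 0 ≤ p) :
    Measurable (fun z : EuclideanSpace ℝ (Fin d) × EuclideanSpace ℝ (Fin d) =>
      ENNReal.ofReal (‖z.1 - z.2‖ ^ p)) := by
  exact ENNReal.measurable_ofReal.comp
    ((Real.continuous_rpow_const hp).measurable.comp (measurable_fst.sub measurable_snd).norm)

lemma wassersteinPow_emp_le {Ω : Type} {d n : ℕ} {p : ℝ} (hp : 0 ≤ p)
    (X Y : Fin n → Ω → EuclideanSpace ℝ (Fin d)) (ω : Ω) :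
    wassersteinPow d p (empMeasure X ω) (empMeasure Y ω) ≤
      (n : ENNReal)⁻¹ * ∑ i, ENNReal.ofReal (‖X i ω - Y i ω‖ ^ p) := by
  set π : Measure (EuclideanSpace ℝ (Fin d) × EuclideanSpace ℝ (Fin d)) :=
    (n : ENNReal)⁻¹ • ∑ i, Measure.dirac (X i ω, Y i ω) with hπ
  have h1 : π.map Prod.fst = empMeasure X ω := by
    rw [hπ, Measure.map_smul, map_sum_dirac measurable_fst]
    rfl
  have h2 : π.map Prod.snd = empMeasure Y ω := by
    rw [hπ, Measure.map_smul, map_sum_dirac measurable_snd]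
    rfl
  refine le_trans (iInf_le_of_le π (iInf_le_of_le h1 (iInf_le_of_le h2 le_rfl))) ?_
  rw [hπ, lintegral_smul_measure, lintegral_finset_sum_measure]
  refine mul_le_mul_right (le_of_eq (Finset.sum_congr rfl fun i _ => ?_)) _
  exact lintegral_dirac' _ (cost_measurable d hp)

lemma dens_measurable (d : ℕ) :
    Measurable (fun x : EuclideanSpace ℝ (Fin d) =>
      ENNReal.ofReal ((2 * Real.pi) ^ (-(d : ℝ) / 2) * Real.exp (-‖x‖ ^ 2 / 2))) := by
  refine ENNReal.measurable_ofReal.comp (Measurable.const_mul ?_ _)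
  exact (((measurable_norm.pow_const 2).neg.div_const 2).exp)

lemma stdGaussian_univ_lt_top (d : ℕ) : stdGaussian d Set.univ < ⊤ := by
  rw [_root_.stdGaussian, withDensity_apply _ MeasurableSet.univ, Measure.restrict_univ]
  have heq : ∀ x : EuclideanSpace ℝ (Fin d),
      ENNReal.ofReal ((2 * Real.pi) ^ (-(d : ℝ) / 2) * Real.exp (-‖x‖ ^ 2 / 2)) =
      ENNReal.ofReal ((2 * Real.pi) ^ (-(d : ℝ) / 2)) *
        ENNReal.ofReal (Real.exp (-(1/2 : ℝ) * ‖x‖ ^ 2)) := by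
    intro x
    rw [← ENNReal.ofReal_mul (by positivity)]
    ring_nf
  simp only [heq]
  rw [lintegral_const_mul' _ _ ENNReal.ofReal_ne_top]
  exact ENNReal.mul_lt_top ENNReal.ofReal_lt_top (lintegral_exp_neg_mul_sq_norm_lt_top d (by norm_num))

lemma stdGaussian_pos (d : ℕ) {R : ℝ} (hR : 0 < R) :
    0 < stdGaussian d (Metric.closedBall 0 R) := by
  rw [_root_.stdGaussian, withDensity_apply _ measurableSet_closedBall]
  rcases eq_or_ne (∫⁻ x in Metric.closedBall (0 : EuclideanSpace ℝ (Fin d)) R,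
      ENNReal.ofReal ((2 * Real.pi) ^ (-(d : ℝ) / 2) * Real.exp (-‖x‖ ^ 2 / 2))) 0 with h0 | h0
  · exfalso
    have hae := (lintegral_eq_zero_iff (dens_measurable d)).1 h0
    rw [Filter.EventuallyEq, ae_iff] at hae
    have : (volume.restrict (Metric.closedBall (0 : EuclideanSpace ℝ (Fin d)) R))
        {x | ENNReal.ofReal ((2 * Real.pi) ^ (-(d : ℝ) / 2) * Real.exp (-‖x‖ ^ 2 / 2)) ≠ 0} = 0 := by
      simpa using hae
    have huniv : {x : EuclideanSpace ℝ (Fin d) |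
        ENNReal.ofReal ((2 * Real.pi) ^ (-(d : ℝ) / 2) * Real.exp (-‖x‖ ^ 2 / 2)) ≠ 0} = Set.univ := by
      ext x
      simp only [Set.mem_setOf_eq, Set.mem_univ, iff_true, ne_eq, ENNReal.ofReal_eq_zero, not_le]
      positivity
    rw [huniv, Measure.restrict_apply_univ] at this
    exact (Metric.measure_closedBall_pos volume (0 : EuclideanSpace ℝ (Fin d)) hR).ne' this
  · exact pos_iff_ne_zero.mpr h0

lemma rpow_le_exp_aux {r p t : ℝ} (hr : 0 ≤ r) (hp : 0 < p) (h1t : 0 < 1 - t) :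
    r ^ p ≤ Real.exp ((1 - t) / 4 * r ^ 2 + p ^ 2 / (1 - t)) := by
  have h1 : r ^ p ≤ Real.exp (p * r) := by
    rcases eq_or_lt_of_le hr with h | h
    · rw [← h, Real.zero_rpow hp.ne']
      exact (Real.exp_pos _).le
    · rw [Real.rpow_def_of_pos h]
      refine Real.exp_le_exp.2 ?_
      have hlog : Real.log r ≤ r := (Real.log_le_sub_one_of_pos h).trans (by linarith)
      nlinarith
  refine h1.trans (Real.exp_le_exp.2 ?_)
  have key : 0 ≤ ((1 - t) * r - 2 * p) ^ 2 := sq_nonneg _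
  have h4 : (1 - t) / 4 * r ^ 2 + p ^ 2 / (1 - t) - p * r =
      ((1 - t) * r - 2 * p) ^ 2 / (4 * (1 - t)) := by
    field_simp
    ring
  nlinarith [div_nonneg key (by linarith : (0:ℝ) ≤ 4 * (1 - t))]

lemma real_core {d : ℕ} {p t R r : ℝ} (hp : 1 ≤ p) (ht0 : 0 < t) (h1t : 0 < 1 - t)
    (hr : 0 ≤ r) :
    (2 * Real.pi) ^ (-(d : ℝ) / 2) * Real.exp (-r ^ 2 / 2) *
      (2 ^ p * Real.exp (t * (r ^ 2 - R ^ 2) / 2) * r ^ p) ≤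
    ((2 * Real.pi) ^ (-(d : ℝ) / 2) * 2 ^ p * Real.exp (p ^ 2 / (1 - t))) *
      Real.exp (-(t * R ^ 2) / 2) * Real.exp (-((1 - t) / 4) * r ^ 2) := by
  have hc : (0:ℝ) < (2 * Real.pi) ^ (-(d : ℝ) / 2) * 2 ^ p := by positivity
  have h3 := rpow_le_exp_aux hr (by linarith : (0:ℝ) < p) h1t
  calc (2 * Real.pi) ^ (-(d : ℝ) / 2) * Real.exp (-r ^ 2 / 2) *
      (2 ^ p * Real.exp (t * (r ^ 2 - R ^ 2) / 2) * r ^ p)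
      = ((2 * Real.pi) ^ (-(d : ℝ) / 2) * 2 ^ p) *
        (Real.exp (-r ^ 2 / 2) * Real.exp (t * (r ^ 2 - R ^ 2) / 2)) * r ^ p := by ring
    _ ≤ ((2 * Real.pi) ^ (-(d : ℝ) / 2) * 2 ^ p) *
        (Real.exp (-r ^ 2 / 2) * Real.exp (t * (r ^ 2 - R ^ 2) / 2)) *
          Real.exp ((1 - t) / 4 * r ^ 2 + p ^ 2 / (1 - t)) := by
        refine mul_le_mul_of_nonneg_left h3 (by positivity)
    _ = ((2 * Real.pi) ^ (-(d : ℝ) / 2) * 2 ^ p) *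
        Real.exp (-r ^ 2 / 2 + t * (r ^ 2 - R ^ 2) / 2 + ((1 - t) / 4 * r ^ 2 + p ^ 2 / (1 - t))) := by
        rw [← Real.exp_add, mul_assoc, ← Real.exp_add]
    _ = ((2 * Real.pi) ^ (-(d : ℝ) / 2) * 2 ^ p) *
        Real.exp (p ^ 2 / (1 - t) + -(t * R ^ 2) / 2 + -((1 - t) / 4) * r ^ 2) := by
        congr 1
        ring_nf
    _ = ((2 * Real.pi) ^ (-(d : ℝ) / 2) * 2 ^ p * Real.exp (p ^ 2 / (1 - t))) *
      Real.exp (-(t * R ^ 2) / 2) * Real.exp (-((1 - t) / 4) * r ^ 2) := by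
        rw [Real.exp_add, Real.exp_add]
        ring

lemma phi_measurable (d : ℕ) (p t R : ℝ) (hp : 0 ≤ p) :
    Measurable (fun x : EuclideanSpace ℝ (Fin d) =>
      ENNReal.ofReal (2 ^ p * Real.exp (t * (‖x‖ ^ 2 - R ^ 2) / 2) * ‖x‖ ^ p)) := by
  refine ENNReal.measurable_ofReal.comp (Measurable.mul (Measurable.const_mul ?_ _) ?_)
  · exact ((((measurable_norm.pow_const 2).sub_const (R ^ 2)).const_mul t).div_const 2).exp
  · exact (Real.continuous_rpow_const hp).measurable.comp measurable_norm

lemma gauss_tail (d : ℕ) {p t R : ℝ} (hp : 1 ≤ p) (ht0 : 0 < t) (h1t : 0 < 1 - t) :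
    ∫⁻ x, ENNReal.ofReal (2 ^ p * Real.exp (t * (‖x‖ ^ 2 - R ^ 2) / 2) * ‖x‖ ^ p)
        ∂(stdGaussian d) ≤
      ENNReal.ofReal (((2 * Real.pi) ^ (-(d : ℝ) / 2) * 2 ^ p * Real.exp (p ^ 2 / (1 - t))) *
          Real.exp (-(t * R ^ 2) / 2)) *
        ∫⁻ x : EuclideanSpace ℝ (Fin d), ENNReal.ofReal (Real.exp (-((1 - t) / 4) * ‖x‖ ^ 2)) := by
  rw [_root_.stdGaussian, lintegral_withDensity_eq_lintegral_mul _ (dens_measurable d)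
    (phi_measurable d p t R (by linarith))]
  rw [← lintegral_const_mul' _ _ ENNReal.ofReal_ne_top]
  refine lintegral_mono fun x => ?_
  simp only [Pi.mul_apply]
  rw [← ENNReal.ofReal_mul (by positivity), ← ENNReal.ofReal_mul (by positivity)]
  exact ENNReal.ofReal_le_ofReal
    (by linarith [real_core (d := d) (R := R) hp ht0 h1t (norm_nonneg x)])


set_option maxHeartbeats 2000000 in
open Classical in
theorem localization_cost (d : ℕ) (hd : 3 ≤ d) (p c : ℝ)
    (hp : 1 ≤ p) (hpd : p < d) (hc₁ : p / d < c) (hc₂ : c < 1) :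
    ∃ C : ℝ, 0 < C ∧ ∃ N : ℕ, ∀ (n : ℕ), N ≤ n →
      ∀ (Ω : Type) (_ : MeasurableSpace Ω) (P : Measure Ω), IsProbabilityMeasure P →
        ∀ (X Z : Fin n → Ω → EuclideanSpace ℝ (Fin d)),
          iIndepFun (Sum.elim X Z) P →
          (∀ i, Measure.map (X i) P = stdGaussian d) →
          (∀ i, Measure.map (Z i) P =
              (stdGaussian d)[|Metric.closedBall 0 (Real.sqrt (2 * c * Real.log n))]) →
          ∫⁻ ω, wassersteinPow d p (empMeasure X ω)
              (empMeasure
                (fun i ω' =>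
                  if X i ω' ∈ Metric.closedBall (0 : EuclideanSpace ℝ (Fin d))
                      (Real.sqrt (2 * c * Real.log n)) then X i ω' else Z i ω') ω) ∂P ≤
            ENNReal.ofReal (C * (n : ℝ) ^ (-(p / d))) := by
  have hd0 : (0:ℝ) < d := by
    have : (0:ℕ) < d := by omega
    exact_mod_cast this
  have hp0 : (0:ℝ) < p := lt_of_lt_of_le one_pos hp
  have hc0 : (0:ℝ) < c := lt_trans (div_pos hp0 hd0) hc₁
  set t : ℝ := (p / (c * d) + 1) / 2 with ht_def
  have hx1 : p / (c * d) < 1 := by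
    rw [div_lt_one (by positivity)]
    calc p = (p / d) * d := by field_simp
    _ < c * d := by exact mul_lt_mul_of_pos_right hc₁ hd0
  have hx0 : 0 < p / (c * d) := by positivity
  have ht0 : 0 < t := by rw [ht_def]; linarith
  have htlt : t < 1 := by rw [ht_def]; linarith
  have h1t : 0 < 1 - t := by linarith
  have htc : p / d < t * c := by
    have h1 : p / (c * d) < t := by rw [ht_def]; linarith
    have h2 : p / (c * d) * c = p / d := by field_simp
    calc p / d = (p / (c * d)) * c := h2.symm
    _ < t * c := mul_lt_mul_of_pos_right h1 hc0
  set K : ℝ := (2 * Real.pi) ^ (-(d : ℝ) / 2) * 2 ^ p * Real.exp (p ^ 2 / (1 - t)) with hK_def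
  have hK : 0 < K := by rw [hK_def]; positivity
  set G : ENNReal := ∫⁻ x : EuclideanSpace ℝ (Fin d),
    ENNReal.ofReal (Real.exp (-((1 - t) / 4) * ‖x‖ ^ 2)) with hG_def
  have hG : G < ⊤ := lintegral_exp_neg_mul_sq_norm_lt_top d (by linarith)
  have hGnn : 0 ≤ G.toReal := ENNReal.toReal_nonneg
  refine ⟨K * G.toReal + 1, by positivity, 2, fun n hn Ω mΩ P hP X Z hind hX hZ => ?_⟩
  have hn1 : (1:ℝ) < n := by exact_mod_cast (by omega : 1 < n)
  have hn0 : (n : ENNReal) ≠ 0 := Nat.cast_ne_zero.2 (by omega)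
  set R : ℝ := Real.sqrt (2 * c * Real.log n) with hR_def
  set B : Set (EuclideanSpace ℝ (Fin d)) := Metric.closedBall 0 R with hB_def
  have hlogn : 0 < Real.log n := Real.log_pos hn1
  have hR0 : 0 < R := Real.sqrt_pos.2 (by positivity)
  have hRsq : R ^ 2 = 2 * c * Real.log n := Real.sq_sqrt (by positivity)
  have hμB_pos : 0 < stdGaussian d B := stdGaussian_pos d hR0
  have hμB_fin : stdGaussian d B ≠ ⊤ :=
    ((measure_mono (Set.subset_univ B)).trans_lt (stdGaussian_univ_lt_top d)).ne
  have hcond_univ : (stdGaussian d)[|B] Set.univ = 1 := by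
    rw [cond_apply measurableSet_closedBall, Set.inter_univ,
      ENNReal.inv_mul_cancel hμB_pos.ne' hμB_fin]
  have hXae : ∀ i, AEMeasurable (X i) P := fun i => by
    by_contra h
    have h2 := Measure.map_of_not_aemeasurable h
    rw [hX i] at h2
    rw [h2] at hμB_pos
    simp at hμB_pos
  have hZae : ∀ i, AEMeasurable (Z i) P := fun i => by
    by_contra h
    have h2 := Measure.map_of_not_aemeasurable h
    have h3 := (hZ i).symm.trans h2
    rw [h3] at hcond_univ
    simp at hcond_univ
  have hZB : ∀ i, ∀ᵐ ω ∂P, ‖Z i ω‖ ≤ R := fun i => by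
    have hmap : P (Z i ⁻¹' Bᶜ) = 0 := by
      rw [← Measure.map_apply_of_aemeasurable (hZae i) measurableSet_closedBall.compl, hZ i,
        cond_apply measurableSet_closedBall]
      simp
    have hset : {ω | ¬ ‖Z i ω‖ ≤ R} = Z i ⁻¹' Bᶜ := by
      ext ω
      simp [hB_def, Metric.mem_closedBall, dist_zero_right]
    rw [ae_iff, hset]
    exact hmap
  have hgae : ∀ i : Fin n, AEMeasurable
      (fun ω => ENNReal.ofReal (‖X i ω - (if X i ω ∈ B then X i ω else Z i ω)‖ ^ p)) P := by
    intro i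
    obtain ⟨u, hu, hu'⟩ := hXae i
    obtain ⟨v, hv, hv'⟩ := hZae i
    refine ⟨fun ω => ENNReal.ofReal (‖u ω - (if u ω ∈ B then u ω else v ω)‖ ^ p), ?_, ?_⟩
    · refine ENNReal.measurable_ofReal.comp
        (((Real.continuous_rpow_const (by linarith : (0:ℝ) ≤ p)).measurable).comp
          (Measurable.norm ?_))
      exact hu.sub (Measurable.ite (hu measurableSet_closedBall) hu hv)
    · filter_upwards [hu', hv'] with ω h1 h2
      simp only [h1, h2]
  have key : ∀ i : Fin n,
      ∫⁻ ω, ENNReal.ofReal (‖X i ω - (if X i ω ∈ B then X i ω else Z i ω)‖ ^ p) ∂P ≤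
        ENNReal.ofReal (K * Real.exp (-(t * R ^ 2) / 2)) * G := by
    intro i
    have hea : ∀ᵐ ω ∂P,
        ENNReal.ofReal (‖X i ω - (if X i ω ∈ B then X i ω else Z i ω)‖ ^ p) ≤
        (fun x => ENNReal.ofReal (2 ^ p * Real.exp (t * (‖x‖ ^ 2 - R ^ 2) / 2) * ‖x‖ ^ p))
          (X i ω) := by
      filter_upwards [hZB i] with ω hω
      by_cases hx : X i ω ∈ B
      · rw [if_pos hx, sub_self, norm_zero, Real.zero_rpow hp0.ne', ENNReal.ofReal_zero]
        exact zero_le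
      · rw [if_neg hx]
        have hRx : R < ‖X i ω‖ := by
          simpa [hB_def, Metric.mem_closedBall, dist_zero_right] using hx
        refine ENNReal.ofReal_le_ofReal ?_
        have h1 : ‖X i ω - Z i ω‖ ≤ 2 * ‖X i ω‖ :=
          (norm_sub_le _ _).trans (by linarith)
        have h2 : ‖X i ω - Z i ω‖ ^ p ≤ (2 * ‖X i ω‖) ^ p :=
          Real.rpow_le_rpow (norm_nonneg _) h1 (by linarith)
        have h3 : (2 * ‖X i ω‖ : ℝ) ^ p = 2 ^ p * ‖X i ω‖ ^ p :=
          Real.mul_rpow (by norm_num) (norm_nonneg _)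
        have h4 : (1:ℝ) ≤ Real.exp (t * (‖X i ω‖ ^ 2 - R ^ 2) / 2) := by
          refine Real.one_le_exp ?_
          have : R ^ 2 ≤ ‖X i ω‖ ^ 2 := by nlinarith [hR0.le]
          nlinarith
        calc ‖X i ω - Z i ω‖ ^ p ≤ 2 ^ p * ‖X i ω‖ ^ p := h3 ▸ h2
        _ = 2 ^ p * 1 * ‖X i ω‖ ^ p := by ring
        _ ≤ 2 ^ p * Real.exp (t * (‖X i ω‖ ^ 2 - R ^ 2) / 2) * ‖X i ω‖ ^ p := by
            exact mul_le_mul_of_nonneg_right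
              (mul_le_mul_of_nonneg_left h4 (by positivity))
              (Real.rpow_nonneg (norm_nonneg _) p)
    calc ∫⁻ ω, ENNReal.ofReal (‖X i ω - (if X i ω ∈ B then X i ω else Z i ω)‖ ^ p) ∂P
        ≤ ∫⁻ ω, (fun x => ENNReal.ofReal
            (2 ^ p * Real.exp (t * (‖x‖ ^ 2 - R ^ 2) / 2) * ‖x‖ ^ p)) (X i ω) ∂P :=
          lintegral_mono_ae hea
      _ = ∫⁻ x, ENNReal.ofReal (2 ^ p * Real.exp (t * (‖x‖ ^ 2 - R ^ 2) / 2) * ‖x‖ ^ p)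
            ∂(Measure.map (X i) P) :=
          (lintegral_map' (phi_measurable d p t R (by linarith)).aemeasurable (hXae i)).symm
      _ = ∫⁻ x, ENNReal.ofReal (2 ^ p * Real.exp (t * (‖x‖ ^ 2 - R ^ 2) / 2) * ‖x‖ ^ p)
            ∂(stdGaussian d) := by rw [hX i]
      _ ≤ ENNReal.ofReal (K * Real.exp (-(t * R ^ 2) / 2)) * G := by
          rw [hK_def, hG_def]
          exact gauss_tail d hp ht0 h1t
  calc ∫⁻ ω, wassersteinPow d p (empMeasure X ω)
        (empMeasure (fun i ω' => if X i ω' ∈ B then X i ω' else Z i ω') ω) ∂P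
      ≤ ∫⁻ ω, (n : ENNReal)⁻¹ *
          ∑ i, ENNReal.ofReal (‖X i ω - (if X i ω ∈ B then X i ω else Z i ω)‖ ^ p) ∂P :=
        lintegral_mono fun ω => wassersteinPow_emp_le (by linarith) X _ ω
    _ = (n : ENNReal)⁻¹ * ∑ i, ∫⁻ ω,
          ENNReal.ofReal (‖X i ω - (if X i ω ∈ B then X i ω else Z i ω)‖ ^ p) ∂P := by
        rw [lintegral_const_mul' _ _ (ENNReal.inv_ne_top.2 hn0)]
        congr 1
        exact lintegral_finset_sum' Finset.univ fun i _ => hgae i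
    _ ≤ (n : ENNReal)⁻¹ * ∑ _i : Fin n,
          (ENNReal.ofReal (K * Real.exp (-(t * R ^ 2) / 2)) * G) :=
        mul_le_mul_right (Finset.sum_le_sum fun i _ => key i) _
    _ = ENNReal.ofReal (K * Real.exp (-(t * R ^ 2) / 2)) * G := by
        rw [Finset.sum_const, Finset.card_univ, Fintype.card_fin, nsmul_eq_mul, ← mul_assoc,
          ENNReal.inv_mul_cancel hn0 (ENNReal.natCast_ne_top n), one_mul]
    _ ≤ ENNReal.ofReal ((K * G.toReal + 1) * (n : ℝ) ^ (-(p / d))) := by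
        conv_lhs => rw [← ENNReal.ofReal_toReal hG.ne]
        rw [← ENNReal.ofReal_mul (by positivity)]
        refine ENNReal.ofReal_le_ofReal ?_
        have hexp : Real.exp (-(t * R ^ 2) / 2) = (n : ℝ) ^ (-(t * c)) := by
          rw [Real.rpow_def_of_pos (by linarith : (0:ℝ) < n)]
          congr 1
          rw [hRsq]
          ring
        have hrp : (n : ℝ) ^ (-(t * c)) ≤ (n : ℝ) ^ (-(p / d)) :=
          Real.rpow_le_rpow_of_exponent_le (by linarith) (by linarith)
        have hrpnn : (0:ℝ) ≤ (n : ℝ) ^ (-(t * c)) := Real.rpow_nonneg (by linarith) _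
        calc K * Real.exp (-(t * R ^ 2) / 2) * G.toReal
            = (K * G.toReal) * (n : ℝ) ^ (-(t * c)) := by rw [hexp]; ring
          _ ≤ (K * G.toReal + 1) * (n : ℝ) ^ (-(p / d)) := by
              refine mul_le_mul (by linarith) hrp hrpnn (by positivity)
end

section
/- Let μ be the standard Gaussian measure on ℝ^d, let t > 0, s > 0, s' > 0, and set a = e^{−(s+t)}, b = e^{−(s'+t)}, α² = 1 + a²/(1 − a²) + b²/(1 − b²) (with α > 0) and β = a/(1 − a²) + b/(1 − b²). Then for every Borel set A ⊂ ℝ^d and every y ∈ ℝ^d, ∫_A p_{s+t}(x,y) · p_{s'+t}(x,y) dμ(x) = p_{s+s'+2t}(y,y) · μ( −(β/α) y + α A ), where −(β/α) y + α A denotes the image of A under the affine map x ↦ α x − (β/α) y. Moreover α²/β − 1 = (1 − a)(1 − b)/(a + b). -/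
open MeasureTheory ProbabilityTheory Filter Set

lemma aux_pointwise (d : ℕ) (a b α β P nx X ny : ℝ) (ha0 : 0 < a) (ha1 : a < 1)
    (hb0 : 0 < b) (hb1 : b < 1) (hα0 : 0 < α)
    (hα2 : α^2 = 1 + a ^ 2 / (1 - a ^ 2) + b ^ 2 / (1 - b ^ 2))
    (hβ : β = a / (1 - a ^ 2) + b / (1 - b ^ 2)) :
    P * Real.exp (-nx / 2) *
      ((1 - a ^ 2) ^ (-(d : ℝ) / 2) *
          Real.exp (-(a ^ 2 / (2 * (1 - a ^ 2))) * (nx + ny - 2 * a⁻¹ * X)) *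
        ((1 - b ^ 2) ^ (-(d : ℝ) / 2) *
          Real.exp (-(b ^ 2 / (2 * (1 - b ^ 2))) * (nx + ny - 2 * b⁻¹ * X)))) =
    (1 - (a * b) ^ 2) ^ (-(d : ℝ) / 2) *
        Real.exp (-((a * b) ^ 2 / (2 * (1 - (a * b) ^ 2))) * (ny + ny - 2 * (a * b)⁻¹ * ny)) *
      (α ^ d * (P * Real.exp (-(α ^ 2 * nx - 2 * β * X + (β / α) ^ 2 * ny) / 2))) := by
  have hA : (0:ℝ) < 1 - a^2 := by nlinarith
  have hB : (0:ℝ) < 1 - b^2 := by nlinarith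
  have hC : (0:ℝ) < 1 - (a*b)^2 := by nlinarith
  have hA' : (1:ℝ) - a^2 ≠ 0 := ne_of_gt hA
  have hB' : (1:ℝ) - b^2 ≠ 0 := ne_of_gt hB
  have hC' : (1:ℝ) - (a*b)^2 ≠ 0 := ne_of_gt hC
  have hβval : β = (a+b)*(1-a*b)/((1-a^2)*(1-b^2)) := by rw [hβ]; field_simp; ring
  have hα2val : α^2 = (1-(a*b)^2)/((1-a^2)*(1-b^2)) := by rw [hα2]; field_simp; ring
  have key : (1-a^2) ^ (-(d:ℝ)/2) * (1-b^2) ^ (-(d:ℝ)/2)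
      = (1-(a*b)^2) ^ (-(d:ℝ)/2) * α ^ d := by
    have hsq : (α:ℝ) ^ d = (α^2) ^ ((d:ℝ)/2) := by
      rw [← Real.rpow_natCast α d, ← Real.rpow_natCast α 2, ← Real.rpow_mul hα0.le]
      congr 1; push_cast; ring
    have hαd : (α:ℝ) ^ d = ((1-(a*b)^2)/((1-a^2)*(1-b^2))) ^ ((d:ℝ)/2) := by
      rw [hsq, hα2val]
    rw [hαd, Real.div_rpow hC.le (by positivity), Real.mul_rpow hA.le hB.le]
    rw [neg_div, Real.rpow_neg hA.le, Real.rpow_neg hB.le, Real.rpow_neg hC.le]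
    have h1 : (1-a^2) ^ ((d:ℝ)/2) ≠ 0 := by positivity
    have h2 : (1-b^2) ^ ((d:ℝ)/2) ≠ 0 := by positivity
    have h3 : (1-(a*b)^2) ^ ((d:ℝ)/2) ≠ 0 := by positivity
    field_simp
    exact (div_self (by rwa [mul_pow] at h3)).symm
  have keyE : Real.exp (-nx / 2) *
      (Real.exp (-(a ^ 2 / (2 * (1 - a ^ 2))) * (nx + ny - 2 * a⁻¹ * X)) *
       Real.exp (-(b ^ 2 / (2 * (1 - b ^ 2))) * (nx + ny - 2 * b⁻¹ * X))) =
      Real.exp (-((a * b) ^ 2 / (2 * (1 - (a * b) ^ 2))) * (ny + ny - 2 * (a * b)⁻¹ * ny)) *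
      Real.exp (-(α ^ 2 * nx - 2 * β * X + (β / α) ^ 2 * ny) / 2) := by
    rw [← Real.exp_add, ← Real.exp_add, ← Real.exp_add]
    congr 1
    rw [div_pow β α, hα2val, hβval]
    field_simp [ha0.ne', hb0.ne', (by rwa [mul_pow] at hC' : (1:ℝ) - a^2*b^2 ≠ 0)]
    ring
  calc P * Real.exp (-nx / 2) *
      ((1 - a ^ 2) ^ (-(d : ℝ) / 2) *
          Real.exp (-(a ^ 2 / (2 * (1 - a ^ 2))) * (nx + ny - 2 * a⁻¹ * X)) *
        ((1 - b ^ 2) ^ (-(d : ℝ) / 2) *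
          Real.exp (-(b ^ 2 / (2 * (1 - b ^ 2))) * (nx + ny - 2 * b⁻¹ * X))))
      = ((1 - a ^ 2) ^ (-(d : ℝ) / 2) * (1 - b ^ 2) ^ (-(d : ℝ) / 2)) *
        (P * (Real.exp (-nx / 2) *
          (Real.exp (-(a ^ 2 / (2 * (1 - a ^ 2))) * (nx + ny - 2 * a⁻¹ * X)) *
           Real.exp (-(b ^ 2 / (2 * (1 - b ^ 2))) * (nx + ny - 2 * b⁻¹ * X))))) := by ring
    _ = ((1 - (a*b) ^ 2) ^ (-(d : ℝ) / 2) * α ^ d) *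
        (P * (Real.exp (-((a * b) ^ 2 / (2 * (1 - (a * b) ^ 2))) * (ny + ny - 2 * (a * b)⁻¹ * ny)) *
          Real.exp (-(α ^ 2 * nx - 2 * β * X + (β / α) ^ 2 * ny) / 2))) := by rw [key, keyE]
    _ = _ := by ring

theorem mehler_product_formula (d : ℕ) (t s s' : ℝ) (ht : 0 < t) (hs : 0 < s) (hs' : 0 < s')
    (a b α β : ℝ) (ha : a = Real.exp (-(s + t))) (hb : b = Real.exp (-(s' + t)))
    (hα : α = Real.sqrt (1 + a ^ 2 / (1 - a ^ 2) + b ^ 2 / (1 - b ^ 2)))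
    (hβ : β = a / (1 - a ^ 2) + b / (1 - b ^ 2)) :
    (∀ (A : Set (EuclideanSpace ℝ (Fin d))), MeasurableSet A →
        ∀ y : EuclideanSpace ℝ (Fin d),
          ∫ x in A, mehler d (s + t) x y * mehler d (s' + t) x y ∂(stdGaussian d) =
            mehler d (s + s' + 2 * t) y y *
              (stdGaussian d ((fun x => α • x - (β / α) • y) '' A)).toReal) ∧
      α ^ 2 / β - 1 = (1 - a) * (1 - b) / (a + b) := by
  have ha0 : 0 < a := ha ▸ Real.exp_pos _
  have ha1 : a < 1 := ha ▸ Real.exp_lt_one_iff.mpr (by linarith)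
  have hb0 : 0 < b := hb ▸ Real.exp_pos _
  have hb1 : b < 1 := hb ▸ Real.exp_lt_one_iff.mpr (by linarith)
  have hA : (0:ℝ) < 1 - a^2 := by nlinarith
  have hB : (0:ℝ) < 1 - b^2 := by nlinarith
  have hαarg : (0:ℝ) < 1 + a ^ 2 / (1 - a ^ 2) + b ^ 2 / (1 - b ^ 2) := by
    have h1 : 0 ≤ a^2/(1-a^2) := div_nonneg (sq_nonneg a) hA.le
    have h2 : 0 ≤ b^2/(1-b^2) := div_nonneg (sq_nonneg b) hB.le
    linarith
  have hα0 : 0 < α := hα ▸ Real.sqrt_pos.mpr hαarg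
  have hα2 : α^2 = 1 + a ^ 2 / (1 - a ^ 2) + b ^ 2 / (1 - b ^ 2) := by
    rw [hα, Real.sq_sqrt hαarg.le]
  constructor
  · intro A hA' y
    -- exp rewrites
    have hea : Real.exp (-2 * (s + t)) = a ^ 2 := by
      rw [ha, sq, ← Real.exp_add]; congr 1; ring
    have heainv : Real.exp (s + t) = a⁻¹ := by
      rw [ha, ← Real.exp_neg]; congr 1; ring
    have heb : Real.exp (-2 * (s' + t)) = b ^ 2 := by
      rw [hb, sq, ← Real.exp_add]; congr 1; ring
    have hebinv : Real.exp (s' + t) = b⁻¹ := by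
      rw [hb, ← Real.exp_neg]; congr 1; ring
    have hec : Real.exp (-2 * (s + s' + 2 * t)) = (a * b) ^ 2 := by
      rw [ha, hb, sq, ← Real.exp_add, ← Real.exp_add]
      congr 1; ring
    have hecinv : Real.exp (s + s' + 2 * t) = (a * b)⁻¹ := by
      rw [ha, hb, ← Real.exp_add, ← Real.exp_neg]; congr 1; ring
    set h : EuclideanSpace ℝ (Fin d) → ℝ :=
      fun x => (2 * Real.pi) ^ (-(d : ℝ) / 2) * Real.exp (-‖x‖ ^ 2 / 2) with hh
    have hcont : Continuous h := by
      apply continuous_const.mul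
      exact Real.continuous_exp.comp (by continuity)
    have hpos : ∀ x, 0 ≤ h x := fun x => by positivity
    set T : EuclideanSpace ℝ (Fin d) → EuclideanSpace ℝ (Fin d) :=
      fun x => α • x - (β / α) • y with hT
    have hL : ∫ x in A, mehler d (s + t) x y * mehler d (s' + t) x y ∂(stdGaussian d)
        = ∫ x in A, h x * (mehler d (s + t) x y * mehler d (s' + t) x y)
            ∂(volume : Measure (EuclideanSpace ℝ (Fin d))) := by
      have heq : stdGaussian d
          = (volume : Measure (EuclideanSpace ℝ (Fin d))).withDensity
              (fun x => (((h x).toNNReal : NNReal) : ENNReal)) := rfl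
      rw [heq, setIntegral_withDensity_eq_setIntegral_smul
          (hcont.measurable.real_toNNReal) _ hA']
      refine setIntegral_congr_fun hA' (fun x _ => ?_)
      rw [NNReal.smul_def, Real.coe_toNNReal _ (hpos x), smul_eq_mul]
    have hinj : Function.Injective T := by
      intro x x' hxx
      exact smul_right_injective _ hα0.ne' (sub_left_inj.mp hxx)
    have hTA : MeasurableSet (T '' A) :=
      hA'.image_of_continuousOn_injOn
        (((continuous_id.const_smul α).sub continuous_const).continuousOn) (hinj.injOn)
    have hf' : ∀ x ∈ A, HasFDerivWithinAt T
        (α • ContinuousLinearMap.id ℝ (EuclideanSpace ℝ (Fin d))) A x := by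
      intro x _
      exact (((hasFDerivAt_id x).const_smul α).sub_const _).hasFDerivWithinAt
    have hdet : (α • ContinuousLinearMap.id ℝ (EuclideanSpace ℝ (Fin d))).det = α ^ d := by
      simp [ContinuousLinearMap.det, LinearMap.det_smul, finrank_euclideanSpace_fin]
    have hR : (stdGaussian d (T '' A)).toReal
        = ∫ x in A, α ^ d * h (T x) ∂(volume : Measure (EuclideanSpace ℝ (Fin d))) := by
      have h1 : stdGaussian d (T '' A) = ∫⁻ x in T '' A, ENNReal.ofReal (h x) ∂volume :=
        withDensity_apply _ hTA
      have h2 : ∫ x in T '' A, h x ∂(volume : Measure (EuclideanSpace ℝ (Fin d)))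
          = (∫⁻ x in T '' A, ENNReal.ofReal (h x) ∂volume).toReal := by
        apply integral_eq_lintegral_of_nonneg_ae
        · exact Filter.Eventually.of_forall hpos
        · exact hcont.aestronglyMeasurable.restrict
      rw [h1, ← h2]
      rw [integral_image_eq_integral_abs_det_fderiv_smul volume hA' hf' hinj.injOn h]
      refine setIntegral_congr_fun hA' (fun x _ => ?_)
      rw [hdet, smul_eq_mul, abs_of_pos (by positivity)]
    -- norm of T x
    have hnorm : ∀ x : EuclideanSpace ℝ (Fin d),
        ‖T x‖ ^ 2 = α ^ 2 * ‖x‖ ^ 2 - 2 * β * inner ℝ x y + (β / α) ^ 2 * ‖y‖ ^ 2 := by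
      intro x
      have : T x = α • x - (β / α) • y := rfl
      rw [this, norm_sub_sq_real, norm_smul, norm_smul, real_inner_smul_left,
        real_inner_smul_right]
      rw [mul_pow, mul_pow, Real.norm_eq_abs, Real.norm_eq_abs, sq_abs, sq_abs]
      have : α * (β / α * inner ℝ x y) = β * inner ℝ x y := by
        field_simp
      rw [this]
      ring
    -- pointwise identity
    have hpt : ∀ x : EuclideanSpace ℝ (Fin d),
        h x * (mehler d (s + t) x y * mehler d (s' + t) x y)
          = mehler d (s + s' + 2 * t) y y * (α ^ d * h (T x)) := by
      intro x
      simp only [hh, mehler, hea, heb, hec, heainv, hebinv, hecinv,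
        real_inner_self_eq_norm_sq, hnorm x]
      exact aux_pointwise d a b α β _ (‖x‖^2) (inner ℝ x y) (‖y‖^2)
        ha0 ha1 hb0 hb1 hα0 hα2 hβ
    rw [hL, hR, ← integral_const_mul]
    exact setIntegral_congr_fun hA' (fun x _ => hpt x)
  · -- algebraic identity
    have hA' : (1:ℝ) - a^2 ≠ 0 := ne_of_gt hA
    have hB' : (1:ℝ) - b^2 ≠ 0 := ne_of_gt hB
    have hP : (0:ℝ) < 1 - a*b := by nlinarith
    have hβval : β = (a+b)*(1-a*b)/((1-a^2)*(1-b^2)) := by rw [hβ]; field_simp; ring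
    have hα2val : α^2 = (1-(a*b)^2)/((1-a^2)*(1-b^2)) := by rw [hα2]; field_simp; ring
    have hC' : (1:ℝ) - (a*b)^2 ≠ 0 := by nlinarith
    have hab' : a + b ≠ 0 := by positivity
    have hP' : (1:ℝ) - a*b ≠ 0 := ne_of_gt hP
    rw [hα2val, hβval]; field_simp; ring
end
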